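/- In the comparability graph G on P(n) (distinct A, B adjacent iff one contains the other), every vertex A lying outside the t middle layers (i.e., with ||A| - floor(n/2)| > some bound placing A outside layers floor(n/2) - floor(t/2) + 1, ..., floor(n/2) + ceil(t/2)) has at least C(ceil(n/2), t) neighbours inside those t middle layers. -/

import Mathlib

/-- comparability graph on the power set of `[n]`. -/
def compGraph (n : ℕ) : SimpleGraph (Finset (Fin n)) where
  Adj A B := A ≠ B ∧ (A ⊆ B ∨ B ⊆ A)
  symm := ⟨fun A B h => ⟨h.1.symm, h.2.symm⟩⟩
  loopless := ⟨fun A h => h.1 rfl⟩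

instance (n : ℕ) : DecidableRel (compGraph n).Adj := fun A B =>
  inferInstanceAs (Decidable (A ≠ B ∧ (A ⊆ B ∨ B ⊆ A)))

/-- The sizes of the `t` middle layers of the cube (the first `t` layer sizes
in the centrality order `⌊n/2⌋, ⌊n/2⌋+1, ⌊n/2⌋-1, ⌊n/2⌋+2, …`). -/
def middleSizes (n t : ℕ) : Finset ℕ :=
  Finset.Icc (n / 2 - (t - 1) / 2) (n / 2 + t / 2)

/-- Every vertex of the comparability graph lying outside the `t` middle layers
has at least `C(⌈n/2⌉, t)` neighbours inside the `t` middle layers. -/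
theorem neighbours_in_middle_layers (t : ℕ) (ht : 1 ≤ t) :
    ∃ n₀ : ℕ, ∀ n ≥ n₀, ∀ A : Finset (Fin n), A.card ∉ middleSizes n t →
      Nat.choose ((n + 1) / 2) t ≤
        (Finset.univ.filter
          (fun B : Finset (Fin n) =>
            (compGraph n).Adj A B ∧ B.card ∈ middleSizes n t)).card := by
  refine ⟨2 * t + 2, fun n hn A hA => ?_⟩
  set k := A.card with hk
  have hkn : k ≤ n := by
    have := A.card_le_univ
    simpa using this
  set lo := n / 2 - (t - 1) / 2 with hlo
  set hi := n / 2 + t / 2 with hhi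
  have hmem : ∀ m, m ∈ middleSizes n t ↔ lo ≤ m ∧ m ≤ hi := by
    intro m; simp [middleSizes, Finset.mem_Icc, hlo, hhi]
  have hout : k < lo ∨ hi < k := by
    rw [hmem] at hA; omega
  rcases hout with hlow | hhigh
  · -- A is below the middle layers: count supersets of A of size hi
    have hkhi : k < hi := by omega
    have hhin : hi ≤ n := by omega
    set S := (Aᶜ.powersetCard (hi - k)).image (fun C => A ∪ C) with hS
    have hdisj : ∀ C : Finset (Fin n), C ⊆ Aᶜ → Disjoint A C := by
      intro C hC
      exact (le_compl_iff_disjoint_right.mp hC).symm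
    have hScard : S.card = (n - k).choose (hi - k) := by
      rw [hS, Finset.card_image_of_injOn, Finset.card_powersetCard,
        Finset.card_compl]
      · congr 1
        simp [hk]
      · intro C1 h1 C2 h2 h
        rw [Finset.mem_coe, Finset.mem_powersetCard] at h1 h2
        have e1 : (A ∪ C1) \ A = C1 :=
          Finset.union_sdiff_cancel_left (hdisj C1 h1.1)
        have e2 : (A ∪ C2) \ A = C2 :=
          Finset.union_sdiff_cancel_left (hdisj C2 h2.1)
        simp only at h
        rw [← e1, ← e2, h]
    have hsub : S ⊆ Finset.univ.filter
        (fun B : Finset (Fin n) =>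
          (compGraph n).Adj A B ∧ B.card ∈ middleSizes n t) := by
      intro B hB
      rw [hS, Finset.mem_image] at hB
      obtain ⟨C, hC, rfl⟩ := hB
      rw [Finset.mem_powersetCard] at hC
      have hcard : (A ∪ C).card = hi := by
        rw [Finset.card_union_of_disjoint (hdisj C hC.1), hC.2, ← hk]
        omega
      simp only [Finset.mem_filter, Finset.mem_univ, true_and]
      refine ⟨⟨?_, Or.inl Finset.subset_union_left⟩, ?_⟩
      · intro h
        rw [← h] at hcard
        omega
      · rw [hmem, hcard]; omega
    have h1 : Nat.choose ((n + 1) / 2) t ≤ (n - k).choose (hi - k) := by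
      have e1 : (n - k).choose (hi - k) = (n - k).choose (n - hi) := by
        rw [← Nat.choose_symm (by omega : hi - k ≤ n - k)]
        congr 1
        omega
      have e2 : ((n - hi) + t).choose (n - hi) = ((n - hi) + t).choose t := by
        rw [← Nat.choose_symm (by omega : t ≤ (n - hi) + t)]
        congr 1
        omega
      calc Nat.choose ((n + 1) / 2) t ≤ ((n - hi) + t).choose t :=
            Nat.choose_le_choose t (by omega)
        _ = ((n - hi) + t).choose (n - hi) := e2.symm
        _ ≤ (n - k).choose (n - hi) := Nat.choose_le_choose _ (by omega)
        _ = (n - k).choose (hi - k) := e1.symm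
    calc Nat.choose ((n + 1) / 2) t ≤ S.card := by rw [hScard]; exact h1
      _ ≤ _ := Finset.card_le_card hsub
  · -- A is above the middle layers: count subsets of A of size lo
    have hlok : lo < k := by omega
    set S := A.powersetCard lo with hS
    have hScard : S.card = k.choose lo := by
      rw [hS, Finset.card_powersetCard, ← hk]
    have hsub : S ⊆ Finset.univ.filter
        (fun B : Finset (Fin n) =>
          (compGraph n).Adj A B ∧ B.card ∈ middleSizes n t) := by
      intro B hB
      rw [hS, Finset.mem_powersetCard] at hB
      simp only [Finset.mem_filter, Finset.mem_univ, true_and]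
      refine ⟨⟨?_, Or.inr hB.1⟩, ?_⟩
      · intro h
        rw [← h, ← hk] at hB
        omega
      · rw [hmem, hB.2]; omega
    have h1 : Nat.choose ((n + 1) / 2) t ≤ k.choose lo := by
      have e2 : (lo + t).choose lo = (lo + t).choose t := by
        rw [← Nat.choose_symm (by omega : t ≤ lo + t)]
        congr 1
        omega
      calc Nat.choose ((n + 1) / 2) t ≤ (lo + t).choose t :=
            Nat.choose_le_choose t (by omega)
        _ = (lo + t).choose lo := e2.symm
        _ ≤ k.choose lo := Nat.choose_le_choose _ (by omega)
    calc Nat.choose ((n + 1) / 2) t ≤ S.card := by rw [hScard]; exact h1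
      _ ≤ _ := Finset.card_le_card hsub
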